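/- Let X be a type and E : X → X → Prop a reflexive relation. Let P := {p : X × X // E p.1 p.2}, and define relations on P by: T' p q := E p.val.1 q.val.2, R' p q := E q.val.1 p.val.2, and K p q := (p.val.2 = q.val.2). Then T', R', K are reflexive relations on P with R' ⊓ K ≤ T', and if the shifting property holds for the triple (R', K, T') on P, then E is symmetric: for all x, y ∈ X, E x y implies E y x. -/

import Mathlib

/-- The shifting property for relations `R`, `S`, `T` on a type `X`. -/
def ShiftingProp {X : Type*} (R S T : X → X → Prop) : Prop :=
  ∀ x y u v : X, R x y → T x y → S x u → S y v → R u v → T u v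

/-- Relational core of Theorem 2, (ii) ⇒ (i): if the Shifting Lemma holds for the
reflexive relations `R'`, `K`, `T'` on `E` (as an object), then the reflexive
relation `E` is symmetric. -/
theorem symm_of_shifting {X : Type*} (E : X → X → Prop) (hE : ∀ x, E x x) :
    let P := {p : X × X // E p.1 p.2}
    let T' : P → P → Prop := fun p q => E p.val.1 q.val.2
    let R' : P → P → Prop := fun p q => E q.val.1 p.val.2
    let K : P → P → Prop := fun p q => p.val.2 = q.val.2
    (∀ p, T' p p) ∧ (∀ p, R' p p) ∧ (∀ p, K p p) ∧
      (∀ p q, R' p q ∧ K p q → T' p q) ∧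
      (ShiftingProp R' K T' → ∀ x y, E x y → E y x) := by
  intro P T' R' K
  refine ⟨fun p => p.2, fun p => p.2, fun p => rfl, ?_, ?_⟩
  · rintro p q ⟨h1, h2⟩
    simpa [T', show p.val.2 = q.val.2 from h2] using p.2
  · intro hs x y hxy
    exact hs ⟨(x, y), hxy⟩ ⟨(x, x), hE x⟩ ⟨(y, y), hE y⟩ ⟨(x, x), hE x⟩
      hxy (hE x) rfl rfl hxy
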